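/- Let R₁ = I₁ × J₁ and R₂ = I₂ × J₂ be dyadic rectangles with I₁ ∩ I₂ = ∅ and J₁ ∩ J₂ = ∅. Then any dyadic rectangle R containing a point of R₁ and a point of R₂ must contain both R₁ and R₂. Consequently dist_H(p₁, p₂) = dist_H(q₁, q₂) for all p₁, q₁ ∈ R₁ and p₂, q₂ ∈ R₂. -/
import Mathlib

open MeasureTheory
open scoped ENNReal

/-- A dyadic interval `[k·2^n, (k+1)·2^n)`. -/
def IsDyadicInterval (I : Set ℝ) : Prop :=
  ∃ k n : ℤ, I = Set.Ico ((k : ℝ) * 2 ^ n) (((k : ℝ) + 1) * 2 ^ n)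

/-- An axis-parallel dyadic rectangle in the plane. -/
def IsDyadicRect (R : Set (ℝ × ℝ)) : Prop :=
  ∃ I J : Set ℝ, IsDyadicInterval I ∧ IsDyadicInterval J ∧ R = I ×ˢ J

/-- `dist_H(p,q) = inf { |R|^{1/2} : R dyadic rectangle containing p and q }`. -/
noncomputable def distH (p q : ℝ × ℝ) : ℝ≥0∞ :=
  sInf {v | ∃ R : Set (ℝ × ℝ), IsDyadicRect R ∧ p ∈ R ∧ q ∈ R ∧ v = volume R ^ (1 / 2 : ℝ)}

lemma dyadic_subset_of_le {k n k' n' : ℤ} (h : n ≤ n')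
    (hne : (Set.Ico ((k:ℝ)*2^n) (((k:ℝ)+1)*2^n) ∩
      Set.Ico ((k':ℝ)*2^n') (((k':ℝ)+1)*2^n')).Nonempty) :
    Set.Ico ((k:ℝ)*2^n) (((k:ℝ)+1)*2^n) ⊆ Set.Ico ((k':ℝ)*2^n') (((k':ℝ)+1)*2^n') := by
  obtain ⟨x, ⟨hx1, hx2⟩, hx3, hx4⟩ := hne
  have h2n : (0:ℝ) < 2^n := by positivity
  set m : ℕ := (n' - n).toNat with hm
  have hmz : (m : ℤ) = n' - n := Int.toNat_of_nonneg (by omega)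
  have hn' : (2:ℝ)^n' = ((2^m : ℤ) : ℝ) * 2^n := by
    push_cast
    rw [← zpow_natCast (2:ℝ) m, ← zpow_add₀ (two_ne_zero), hmz]
    ring_nf
  have hA : k' * 2^m ≤ k := by
    have : (k':ℝ) * 2^m * 2^n < ((k:ℝ)+1) * 2^n := by
      calc (k':ℝ) * 2^m * 2^n = k' * 2^n' := by rw [hn']; push_cast; ring
      _ ≤ x := hx3
      _ < _ := hx2
    have h2 : (k':ℝ) * 2^m < (k:ℝ)+1 := lt_of_mul_lt_mul_right this h2n.le
    have : (k' * 2^m : ℤ) < k + 1 := by exact_mod_cast h2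
    omega
  have hB : k + 1 ≤ (k'+1) * 2^m := by
    have : (k:ℝ) * 2^n < ((k':ℝ)+1) * 2^m * 2^n := by
      calc (k:ℝ) * 2^n ≤ x := hx1
      _ < ((k':ℝ)+1) * 2^n' := hx4
      _ = _ := by rw [hn']; push_cast; ring
    have h2 : (k:ℝ) < ((k':ℝ)+1) * 2^m := lt_of_mul_lt_mul_right this h2n.le
    have : (k : ℤ) < (k'+1) * 2^m := by exact_mod_cast h2
    omega
  intro z ⟨hz1, hz2⟩
  have hA' : (k':ℝ) * 2^m ≤ (k:ℝ) := by exact_mod_cast hA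
  have hB' : (k:ℝ) + 1 ≤ ((k':ℝ)+1) * 2^m := by exact_mod_cast hB
  constructor
  · calc (k':ℝ) * 2^n' = (k':ℝ) * 2^m * 2^n := by rw [hn']; push_cast; ring
    _ ≤ (k:ℝ) * 2^n := by nlinarith
    _ ≤ z := hz1
  · calc z < ((k:ℝ)+1) * 2^n := hz2
    _ ≤ ((k':ℝ)+1) * 2^m * 2^n := by nlinarith
    _ = ((k':ℝ)+1) * 2^n' := by rw [hn']; push_cast; ring

lemma dyadic_nested {I I' : Set ℝ} (hI : IsDyadicInterval I) (hI' : IsDyadicInterval I')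
    (hne : (I ∩ I').Nonempty) : I ⊆ I' ∨ I' ⊆ I := by
  obtain ⟨k, n, rfl⟩ := hI
  obtain ⟨k', n', rfl⟩ := hI'
  rcases le_total n n' with h | h
  · exact Or.inl (dyadic_subset_of_le h hne)
  · exact Or.inr (dyadic_subset_of_le h (by rwa [Set.inter_comm] at hne))

lemma key {K I₁ I₂ : Set ℝ} (hK : IsDyadicInterval K) (h1 : IsDyadicInterval I₁)
    (h2 : IsDyadicInterval I₂) (hdisj : I₁ ∩ I₂ = ∅)
    (m1 : (K ∩ I₁).Nonempty) (m2 : (K ∩ I₂).Nonempty) : I₁ ⊆ K ∧ I₂ ⊆ K := by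
  constructor
  · rcases dyadic_nested hK h1 m1 with h | h
    · exfalso
      obtain ⟨x, hxK, hx2⟩ := m2
      exact Set.eq_empty_iff_forall_notMem.mp hdisj x ⟨h hxK, hx2⟩
    · exact h
  · rcases dyadic_nested hK h2 m2 with h | h
    · exfalso
      obtain ⟨x, hxK, hx1⟩ := m1
      exact Set.eq_empty_iff_forall_notMem.mp hdisj x ⟨hx1, h hxK⟩
    · exact h

/-- If `R₁ = I₁ × J₁`, `R₂ = I₂ × J₂` are dyadic rectangles with disjoint component
intervals, then any dyadic rectangle meeting both must contain both, and consequently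
`dist_H(p₁,p₂) = dist_H(q₁,q₂)` for all `p₁, q₁ ∈ R₁`, `p₂, q₂ ∈ R₂`. -/
theorem stmt2 (I₁ J₁ I₂ J₂ : Set ℝ)
    (hI₁ : IsDyadicInterval I₁) (hJ₁ : IsDyadicInterval J₁)
    (hI₂ : IsDyadicInterval I₂) (hJ₂ : IsDyadicInterval J₂)
    (hI : I₁ ∩ I₂ = ∅) (hJ : J₁ ∩ J₂ = ∅) :
    (∀ R : Set (ℝ × ℝ), IsDyadicRect R →
        (R ∩ I₁ ×ˢ J₁).Nonempty → (R ∩ I₂ ×ˢ J₂).Nonempty →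
        I₁ ×ˢ J₁ ⊆ R ∧ I₂ ×ˢ J₂ ⊆ R) ∧
    (∀ p₁ ∈ I₁ ×ˢ J₁, ∀ q₁ ∈ I₁ ×ˢ J₁, ∀ p₂ ∈ I₂ ×ˢ J₂, ∀ q₂ ∈ I₂ ×ˢ J₂,
        distH p₁ p₂ = distH q₁ q₂) := by
  have main : ∀ R : Set (ℝ × ℝ), IsDyadicRect R →
      (R ∩ I₁ ×ˢ J₁).Nonempty → (R ∩ I₂ ×ˢ J₂).Nonempty →
      I₁ ×ˢ J₁ ⊆ R ∧ I₂ ×ˢ J₂ ⊆ R := by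
    intro R hR m1 m2
    obtain ⟨I, J, hDI, hDJ, rfl⟩ := hR
    obtain ⟨⟨x1, y1⟩, ⟨hx1I, hy1J⟩, hx1, hy1⟩ := m1
    obtain ⟨⟨x2, y2⟩, ⟨hx2I, hy2J⟩, hx2, hy2⟩ := m2
    have hIk := key hDI hI₁ hI₂ hI ⟨x1, hx1I, hx1⟩ ⟨x2, hx2I, hx2⟩
    have hJk := key hDJ hJ₁ hJ₂ hJ ⟨y1, hy1J, hy1⟩ ⟨y2, hy2J, hy2⟩
    exact ⟨Set.prod_mono hIk.1 hJk.1, Set.prod_mono hIk.2 hJk.2⟩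
  refine ⟨main, ?_⟩
  intro p₁ hp₁ q₁ hq₁ p₂ hp₂ q₂ hq₂
  have hset : ∀ a ∈ I₁ ×ˢ J₁, ∀ b ∈ I₁ ×ˢ J₁, ∀ c ∈ I₂ ×ˢ J₂, ∀ d ∈ I₂ ×ˢ J₂,
      {v | ∃ R : Set (ℝ × ℝ), IsDyadicRect R ∧ a ∈ R ∧ c ∈ R ∧ v = volume R ^ (1 / 2 : ℝ)} ⊆
      {v | ∃ R : Set (ℝ × ℝ), IsDyadicRect R ∧ b ∈ R ∧ d ∈ R ∧ v = volume R ^ (1 / 2 : ℝ)} := by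
    intro a ha b hb c hc d hd v ⟨R, hR, haR, hcR, hv⟩
    have := main R hR ⟨a, haR, ha⟩ ⟨c, hcR, hc⟩
    exact ⟨R, hR, this.1 hb, this.2 hd, hv⟩
  unfold distH
  exact le_antisymm (sInf_le_sInf (hset q₁ hq₁ p₁ hp₁ q₂ hq₂ p₂ hp₂))
    (sInf_le_sInf (hset p₁ hp₁ q₁ hq₁ p₂ hp₂ q₂ hq₂))
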